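/- arXiv:1710.04958 — 6 statements merged into one kernel-verified Lean document; each statement's English description precedes it below -/
import Mathlib

section
/- For any Banach space X, 1<p<∞, and A ⊆ K, the UMD_p^A constant equals the UMD constant associated to the closed convex hull of A: β_{p,X}^{A} = β_{p,X}^{\overline{Conv(A)}}. -/
open MeasureTheory Filter Set
open scoped ENNReal NNReal Topology

/-- The martingale difference sequence of `f`, with the convention `mdiff f 0 = f 0`. -/
noncomputable def mdiff {Ω X : Type} [AddGroup X] (f : ℕ → Ω → X) : ℕ → Ω → X :=
  fun n => if n = 0 then f 0 else f n - f (n - 1)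

/-- `β` is an admissible constant for the `UMD_p^A` martingale-transform inequality on `X`:
for every probability space, every filtration, every `X`-valued `L^p`-martingale `f` and every
`A`-valued (deterministic) sequence `(ε_n)`, the transformed martingale
`∑_{k=0}^{N} ε_k d f_k` satisfies the `L^p` bound with constant `β`. -/
def UMDAdmissible (𝕜 : Type) [RCLike 𝕜] (X : Type) [NormedAddCommGroup X]
    [NormedSpace 𝕜 X] [NormedSpace ℝ X] [CompleteSpace X] (p : ℝ) (A : Set 𝕜)
    (β : ℝ≥0∞) : Prop :=
  ∀ (Ω : Type) (m : MeasurableSpace Ω) (μ : Measure Ω), IsProbabilityMeasure μ →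
    ∀ (ℱ : Filtration ℕ m) (f : ℕ → Ω → X), Martingale f ℱ μ →
    (∀ n, MemLp (f n) (ENNReal.ofReal p) μ) →
    ∀ (N : ℕ) (ε : ℕ → 𝕜), (∀ n, ε n ∈ A) →
    eLpNorm (fun ω => ∑ k ∈ Finset.range (N + 1), ε k • mdiff f k ω)
        (ENNReal.ofReal p) μ ≤ β * eLpNorm (f N) (ENNReal.ofReal p) μ

/-- The `UMD_p^A` constant `β_{p,X}^A ∈ [0,∞]` of `X`. -/
noncomputable def umdConst (𝕜 : Type) [RCLike 𝕜] (X : Type) [NormedAddCommGroup X]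
    [NormedSpace 𝕜 X] [NormedSpace ℝ X] [CompleteSpace X] (p : ℝ) (A : Set 𝕜) : ℝ≥0∞ :=
  sInf {β : ℝ≥0∞ | UMDAdmissible 𝕜 X p A β}

theorem umdConst_closure_convexHull (𝕜 : Type) [RCLike 𝕜] (X : Type) [NormedAddCommGroup X]
    [NormedSpace 𝕜 X] [NormedSpace ℝ X] [CompleteSpace X] (p : ℝ) (hp : 1 < p)
    (A : Set 𝕜) :
    umdConst 𝕜 X p A = umdConst 𝕜 X p (closure (convexHull ℝ A)) := by
  have key : ∀ β : ℝ≥0∞, UMDAdmissible 𝕜 X p A β ↔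
      UMDAdmissible 𝕜 X p (closure (convexHull ℝ A)) β := by
    intro β
    constructor
    · intro h Ω m μ hμ ℱ f hf hmem N ε hε
      set q := ENNReal.ofReal p with hqdef
      have hq : 1 ≤ q := ENNReal.one_le_ofReal.mpr hp.le
      -- difference sequence is in L^p
      have hd : ∀ k, MemLp (mdiff f k) q μ := by
        intro k
        rcases Nat.eq_zero_or_pos k with hk | hk
        · subst hk; simpa [mdiff] using hmem 0
        · have : mdiff f k = f k - f (k - 1) := by
            funext ω; simp [mdiff, Nat.pos_iff_ne_zero.mp hk]
          rw [this]; exact (hmem k).sub (hmem (k - 1))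
      set C := β * eLpNorm (f N) q μ with hC
      set G : (Fin (N + 1) → 𝕜) → Ω → X :=
        fun e ω => ∑ k : Fin (N + 1), e k • mdiff f (k : ℕ) ω with hG
      have hGmem : ∀ e, MemLp (G e) q μ := by
        intro e
        have := memLp_finset_sum (Finset.univ : Finset (Fin (N + 1)))
          (f := fun k : Fin (N + 1) => fun ω => e k • mdiff f (k : ℕ) ω)
          (fun k _ => (hd k).const_smul (e k))
        simpa [hG] using this
      set S : Set (Fin (N + 1) → 𝕜) := {e | eLpNorm (G e) q μ ≤ C} with hS
      -- tuples with entries in A lie in S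
      have hSA : Set.pi Set.univ (fun _ : Fin (N + 1) => A) ⊆ S := by
        intro e he
        have hemem : ∀ k : Fin (N + 1), e k ∈ A := fun k => he k (Set.mem_univ k)
        set ε' : ℕ → 𝕜 := fun n => if hn : n < N + 1 then e ⟨n, hn⟩ else e 0 with hε'
        have hε'A : ∀ n, ε' n ∈ A := by
          intro n
          by_cases hn : n < N + 1
          · simp only [hε', dif_pos hn]; exact hemem _
          · simp only [hε', dif_neg hn]; exact hemem _
        have hbound := h Ω m μ hμ ℱ f hf hmem N ε' hε'A
        have heq : G e = fun ω => ∑ k ∈ Finset.range (N + 1), ε' k • mdiff f k ω := by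
          funext ω
          rw [hG]
          rw [← Fin.sum_univ_eq_sum_range (fun k => ε' k • mdiff f k ω) (N + 1)]
          refine Finset.sum_congr rfl fun k _ => ?_
          have hk : (k : ℕ) < N + 1 := k.isLt
          simp [hε', dif_pos hk]; intro h; exact absurd h (by omega)
        rw [Set.mem_setOf_eq, heq]
        exact hbound
      -- S is convex
      have hSconv : Convex ℝ S := by
        intro e₁ h₁ e₂ h₂ a b ha hb hab
        have heq : G (a • e₁ + b • e₂) =
            fun ω => (a : 𝕜) • G e₁ ω + (b : 𝕜) • G e₂ ω := by
          funext ω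
          simp only [hG, Finset.smul_sum]
          rw [← Finset.sum_add_distrib]
          refine Finset.sum_congr rfl fun k _ => ?_
          simp only [Pi.add_apply, Pi.smul_apply, RCLike.real_smul_eq_coe_mul]
          rw [add_smul, mul_smul, mul_smul]
        have hsm₁ : AEStronglyMeasurable (fun ω => (a : 𝕜) • G e₁ ω) μ :=
          ((hGmem e₁).const_smul ((a : 𝕜))).aestronglyMeasurable
        have hsm₂ : AEStronglyMeasurable (fun ω => (b : 𝕜) • G e₂ ω) μ :=
          ((hGmem e₂).const_smul ((b : 𝕜))).aestronglyMeasurable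
        have hnorm : ∀ (r : ℝ), 0 ≤ r →
            ((‖(r : 𝕜)‖₊ : ℝ≥0∞)) = ENNReal.ofReal r := by
          intro r hr
          rw [← enorm_eq_nnnorm, ← ofReal_norm, RCLike.norm_ofReal, abs_of_nonneg hr]
        calc eLpNorm (G (a • e₁ + b • e₂)) q μ
            = eLpNorm (fun ω => (a : 𝕜) • G e₁ ω + (b : 𝕜) • G e₂ ω) q μ := by rw [heq]
          _ ≤ eLpNorm (fun ω => (a : 𝕜) • G e₁ ω) q μ
              + eLpNorm (fun ω => (b : 𝕜) • G e₂ ω) q μ := eLpNorm_add_le hsm₁ hsm₂ hq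
          _ = (‖(a : 𝕜)‖₊ : ℝ≥0∞) * eLpNorm (G e₁) q μ
              + (‖(b : 𝕜)‖₊ : ℝ≥0∞) * eLpNorm (G e₂) q μ := by
                rw [show (fun ω => (a : 𝕜) • G e₁ ω) = (a : 𝕜) • G e₁ from rfl,
                  show (fun ω => (b : 𝕜) • G e₂ ω) = (b : 𝕜) • G e₂ from rfl,
                  eLpNorm_const_smul, eLpNorm_const_smul, enorm_eq_nnnorm, enorm_eq_nnnorm]
          _ ≤ ENNReal.ofReal a * C + ENNReal.ofReal b * C := by
                rw [hnorm a ha, hnorm b hb]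
                exact add_le_add (mul_le_mul_right h₁ _) (mul_le_mul_right h₂ _)
          _ = C := by
                rw [← add_mul, ← ENNReal.ofReal_add ha hb, hab, ENNReal.ofReal_one, one_mul]
      -- S is closed
      have hSclosed : IsClosed S := by
        rw [← isSeqClosed_iff_isClosed]
        intro u e hu hlim
        rw [hS, Set.mem_setOf_eq]
        set err : ℕ → ℝ≥0∞ := fun j =>
          ∑ k : Fin (N + 1), (‖e k - u j k‖₊ : ℝ≥0∞) * eLpNorm (mdiff f (k : ℕ)) q μ
          with herr
        have hub : ∀ j, eLpNorm (G e) q μ ≤ C + err j := by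
          intro j
          have hdecomp : G e = fun ω => G (u j) ω + ∑ k : Fin (N + 1),
              (e k - u j k) • mdiff f (k : ℕ) ω := by
            funext ω
            simp only [hG, ← Finset.sum_add_distrib, sub_smul]
            refine Finset.sum_congr rfl fun k _ => ?_
            abel
          have hsm : ∀ k : Fin (N + 1), k ∈ Finset.univ → AEStronglyMeasurable
              (fun ω => (e k - u j k) • mdiff f (k : ℕ) ω) μ :=
            fun k _ => ((hd (k : ℕ)).const_smul (e k - u j k)).aestronglyMeasurable
          have hsm' : AEStronglyMeasurable (fun ω => ∑ k : Fin (N + 1),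
              (e k - u j k) • mdiff f (k : ℕ) ω) μ := by
            have := memLp_finset_sum (Finset.univ : Finset (Fin (N + 1)))
              (f := fun k : Fin (N + 1) => fun ω => (e k - u j k) • mdiff f (k : ℕ) ω)
              (fun k _ => (hd (k : ℕ)).const_smul (e k - u j k))
            exact this.aestronglyMeasurable
          calc eLpNorm (G e) q μ
              ≤ eLpNorm (G (u j)) q μ + eLpNorm (fun ω => ∑ k : Fin (N + 1),
                  (e k - u j k) • mdiff f (k : ℕ) ω) q μ := by
                rw [hdecomp]
                exact eLpNorm_add_le (hGmem (u j)).aestronglyMeasurable hsm' hq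
            _ ≤ C + err j := by
                refine add_le_add (hu j) ?_
                have h1 : eLpNorm (∑ k : Fin (N + 1), fun ω =>
                    (e k - u j k) • mdiff f (k : ℕ) ω) q μ ≤ err j := by
                  refine (eLpNorm_sum_le hsm hq).trans ?_
                  rw [herr]
                  refine Finset.sum_le_sum fun k _ => ?_
                  rw [show (fun ω => (e k - u j k) • mdiff f (k : ℕ) ω)
                    = (e k - u j k) • mdiff f (k : ℕ) from rfl, eLpNorm_const_smul, enorm_eq_nnnorm]
                refine le_trans (le_of_eq ?_) h1
                congr 1
                funext ω
                simp
        have herr0 : Tendsto err atTop (𝓝 0) := by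
          have : Tendsto err atTop (𝓝 (∑ k : Fin (N + 1), 0)) := by
            refine tendsto_finset_sum _ fun k _ => ?_
            have hk : Tendsto (fun j => e k - u j k) atTop (𝓝 0) := by
              have h2 : Tendsto (fun j => e k - u j k) atTop (𝓝 (e k - e k)) :=
                Tendsto.sub tendsto_const_nhds (tendsto_pi_nhds.1 hlim k)
              simpa using h2
            have hk' : Tendsto (fun j => (‖e k - u j k‖₊ : ℝ≥0∞)) atTop (𝓝 0) := by
              have := hk.nnnorm
              rw [nnnorm_zero] at this
              simpa using (ENNReal.tendsto_coe.2 this)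
            have := ENNReal.Tendsto.mul_const hk'
              (Or.inr (hd (k : ℕ)).eLpNorm_ne_top)
            simpa using this
          simpa using this
        have hlimC : Tendsto (fun j => C + err j) atTop (𝓝 C) := by
          have := tendsto_const_nhds.add herr0 (α := ℕ) (f := fun _ => C)
          simpa using this
        exact ge_of_tendsto' hlimC hub
      -- closed convex hull tuples lie in S
      have hkey : Set.pi Set.univ (fun _ : Fin (N + 1) => closure (convexHull ℝ A)) ⊆ S := by
        have h1 : Set.pi Set.univ (fun _ : Fin (N + 1) => closure (convexHull ℝ A))
            = closure (Set.pi Set.univ (fun _ : Fin (N + 1) => convexHull ℝ A)) := by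
          rw [closure_pi_set]
        have h2 : Set.pi Set.univ (fun _ : Fin (N + 1) => convexHull ℝ A)
            = convexHull ℝ (Set.pi Set.univ (fun _ : Fin (N + 1) => A)) := by
          rw [convexHull_pi]
        rw [h1, h2]
        exact hSclosed.closure_subset_iff.2 (convexHull_min hSA hSconv)
      have hεS : (fun k : Fin (N + 1) => ε (k : ℕ)) ∈ S :=
        hkey fun k _ => hε (k : ℕ)
      rw [hS, Set.mem_setOf_eq, hG] at hεS
      refine le_trans (le_of_eq ?_) hεS
      congr 1
      funext ω
      rw [← Fin.sum_univ_eq_sum_range (fun k => ε k • mdiff f k ω) (N + 1)]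
    · intro h Ω m μ hμ ℱ f hf hmem N ε hε
      exact h Ω m μ hμ ℱ f hf hmem N ε fun n =>
        subset_closure (subset_convexHull ℝ A (hε n))
  unfold umdConst
  congr 1
  ext β
  exact key β
end

section
/- Let X be a Banach space over ℂ, 1<p<∞, and A ⊆ ℂ bounded. Then β_{p,X}^A ≥ max{ (1/π)·Diam(A)·β_{p,X}, sup_{a∈A}|a| }, where Diam(A) = sup_{a₁,a₂∈A} |a₁-a₂| and β_{p,X} = β_{p,X}^{𝔻} is the UMD_p constant of X. -/
open MeasureTheory Filter Set
open scoped ENNReal NNReal Topology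

section Aux
open Real Complex intervalIntegral

noncomputable def sig0 (c : ℝ) (θ : ℝ) : ℝ := if Real.cos c < Real.cos θ then 1 else -1

lemma sig0_abs (c θ : ℝ) : |sig0 c θ| = 1 := by
  unfold sig0; split <;> norm_num

lemma sig0_measurable (c : ℝ) : Measurable (sig0 c) := by
  unfold sig0
  exact Measurable.ite (measurableSet_lt measurable_const (Real.continuous_cos.measurable)) measurable_const measurable_const

lemma sig0_intInt (c a b : ℝ) :
    IntervalIntegrable (fun θ => (sig0 c θ : ℂ) * Complex.exp (Complex.I * θ)) volume a b := by
  rw [intervalIntegrable_iff]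
  apply Integrable.mono' (g := fun _ => (1:ℝ)) (integrableOn_const measure_Ioc_lt_top.ne)
  · exact (((Complex.measurable_ofReal.comp (sig0_measurable c)).mul
      ((Complex.measurable_exp.comp ((measurable_const).mul Complex.measurable_ofReal)))).aestronglyMeasurable).restrict
  · filter_upwards with θ
    rw [norm_mul, mul_comm (Complex.I) _,
      Complex.norm_exp_ofReal_mul_I, Complex.norm_real, Real.norm_eq_abs, sig0_abs, mul_one]

lemma intexp (a b : ℝ) : ∫ θ in a..b, Complex.exp (Complex.I * θ) =
    (Complex.exp (Complex.I * b) - Complex.exp (Complex.I * a)) / Complex.I :=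
  integral_exp_mul_complex Complex.I_ne_zero

lemma sig0_integral {c : ℝ} (h0 : 0 ≤ c) (hc : c ≤ π/2) :
    ∫ θ in (-π)..π, (sig0 c θ : ℂ) * Complex.exp (Complex.I * θ) = 4 * Real.sin c := by
  have hπ := Real.pi_pos
  have hint := sig0_intInt c
  have hA : ∫ θ in (-π)..(-c), (sig0 c θ : ℂ) * Complex.exp (Complex.I * θ)
      = ∫ θ in (-π)..(-c), (-1 : ℂ) * Complex.exp (Complex.I * θ) := by
    apply intervalIntegral.integral_congr
    intro θ hθ
    rw [Set.uIcc_of_le (by linarith)] at hθ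
    have h1 : Real.cos θ ≤ Real.cos c := by
      rw [← Real.cos_neg θ]
      exact Real.cos_le_cos_of_nonneg_of_le_pi h0 (by linarith [hθ.1]) (by linarith [hθ.2])
    simp only [sig0, if_neg (not_lt.2 h1)]; norm_num
  have hC : ∫ θ in c..π, (sig0 c θ : ℂ) * Complex.exp (Complex.I * θ)
      = ∫ θ in c..π, (-1 : ℂ) * Complex.exp (Complex.I * θ) := by
    apply intervalIntegral.integral_congr
    intro θ hθ
    rw [Set.uIcc_of_le (by linarith)] at hθ
    have h1 : Real.cos θ ≤ Real.cos c :=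
      Real.cos_le_cos_of_nonneg_of_le_pi h0 hθ.2 hθ.1
    simp only [sig0, if_neg (not_lt.2 h1)]; norm_num
  have hB : ∫ θ in (-c)..c, (sig0 c θ : ℂ) * Complex.exp (Complex.I * θ)
      = ∫ θ in (-c)..c, (1 : ℂ) * Complex.exp (Complex.I * θ) := by
    apply intervalIntegral.integral_congr_ae
    have hae : ∀ᵐ θ : ℝ, θ ≠ c := by
      rw [ae_iff]
      simpa using measure_singleton c
    filter_upwards [hae] with θ hθc hθ
    rw [Set.uIoc_of_le (by linarith)] at hθ
    have habs : |θ| < c := by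
      rw [abs_lt]; exact ⟨hθ.1, lt_of_le_of_ne hθ.2 hθc⟩
    have h1 : Real.cos c < Real.cos θ := by
      rw [← Real.cos_abs θ]
      exact Real.cos_lt_cos_of_nonneg_of_le_pi (abs_nonneg θ) (by linarith) habs
    simp only [sig0, if_pos h1]; norm_num
  rw [← integral_add_adjacent_intervals (hint (-π) (-c)) (hint (-c) π),
      ← integral_add_adjacent_intervals (hint (-c) c) (hint c π),
      hA, hB, hC]
  simp only [intervalIntegral.integral_const_mul, intexp, one_mul]
  simp only [mul_comm Complex.I, Complex.exp_mul_I]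
  push_cast
  simp only [Complex.cos_neg, Complex.sin_neg, Complex.cos_pi, Complex.sin_pi]
  rw [← Complex.ofReal_sin]
  field_simp
  ring

noncomputable def sig (l : ℂ) (θ : ℝ) : ℝ :=
  sig0 (Real.arcsin (‖l‖)) (θ - Complex.arg l)

lemma sig_abs (l : ℂ) (θ : ℝ) : |sig l θ| = 1 := sig0_abs _ _

lemma sig_measurable (l : ℂ) : Measurable (sig l) :=
  (sig0_measurable _).comp (measurable_id.sub measurable_const)

lemma sig_intInt (l : ℂ) (a b : ℝ) :
    IntervalIntegrable (fun θ => (sig l θ : ℂ) * Complex.exp (Complex.I * θ)) volume a b := by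
  rw [intervalIntegrable_iff]
  apply Integrable.mono' (g := fun _ => (1:ℝ)) (integrableOn_const measure_Ioc_lt_top.ne)
  · exact (((Complex.measurable_ofReal.comp (sig_measurable l)).mul
      ((Complex.measurable_exp.comp ((measurable_const).mul Complex.measurable_ofReal)))).aestronglyMeasurable).restrict
  · filter_upwards with θ
    rw [norm_mul, mul_comm (Complex.I) _,
      Complex.norm_exp_ofReal_mul_I, Complex.norm_real, Real.norm_eq_abs, sig_abs, mul_one]

lemma sig_integral (l : ℂ) (hl : ‖l‖ ≤ 1) :
    ∫ θ in (0:ℝ)..(2*π), (sig l θ : ℂ) * Complex.exp (Complex.I * θ) = 4 * l := by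
  set c := Real.arcsin (‖l‖) with hc
  set φ := Complex.arg l with hφ
  have hg2 : ∀ u : ℝ, (sig0 c u : ℂ) * Complex.exp (Complex.I * ((u:ℝ) + φ))
      = Complex.exp (Complex.I * φ) * ((sig0 c u : ℂ) * Complex.exp (Complex.I * u)) := by
    intro u; push_cast; rw [mul_add, Complex.exp_add]; ring
  have h1 : (∫ θ in (0:ℝ)..(2*π), (sig l θ : ℂ) * Complex.exp (Complex.I * θ))
      = ∫ u in (0 - φ)..(2*π - φ), (sig0 c u : ℂ) * Complex.exp (Complex.I * ((u:ℝ) + φ)) := by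
    rw [← intervalIntegral.integral_comp_sub_right
      (fun u => (sig0 c u : ℂ) * Complex.exp (Complex.I * ((u:ℝ) + φ))) φ]
    apply intervalIntegral.integral_congr
    intro θ _
    have h0 : ((θ - φ : ℝ) : ℂ) + (φ:ℝ) = (θ:ℂ) := by push_cast; ring
    show (sig l θ : ℂ) * Complex.exp (Complex.I * θ)
      = (sig0 c (θ - φ) : ℂ) * Complex.exp (Complex.I * (((θ - φ : ℝ):ℂ) + (φ:ℝ)))
    rw [h0]
    rfl
  have hper : Function.Periodic (fun u : ℝ => (sig0 c u : ℂ) * Complex.exp (Complex.I * u)) (2*π) := by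
    intro u
    have hs : sig0 c (u + 2*π) = sig0 c u := by simp [sig0, Real.cos_add_two_pi]
    simp only [hs]
    congr 1
    push_cast
    rw [mul_add, Complex.exp_add, mul_comm Complex.I ((2:ℂ)*(π:ℂ)), Complex.exp_two_pi_mul_I, mul_one]
  have h3 : (∫ u in (0 - φ)..(2*π - φ), (sig0 c u : ℂ) * Complex.exp (Complex.I * u))
      = ∫ u in (-π)..π, (sig0 c u : ℂ) * Complex.exp (Complex.I * u) := by
    have h := hper.intervalIntegral_add_eq (-φ) (-π)
    rw [show -φ + 2*π = 2*π - φ by ring, show (-π) + 2*π = π by ring] at h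
    rw [show (0:ℝ) - φ = -φ by ring]
    exact h
  rw [h1]
  simp only [hg2]
  rw [intervalIntegral.integral_const_mul, h3,
    sig0_integral (Real.arcsin_nonneg.2 (norm_nonneg l)) (Real.arcsin_le_pi_div_two _),
    Real.sin_arcsin (by linarith [norm_nonneg l]) hl, mul_comm Complex.I (φ:ℂ)]
  rw [hφ]
  linear_combination (4:ℂ) * (Complex.norm_mul_exp_arg_mul_I l)

lemma sign_invariance {h : ℝ → ℝ} (hcont : Continuous h) {u v x y : ℝ}
    (hz : ∀ t ∈ Set.Ioo u v, h t ≠ 0) (hx : x ∈ Set.Ioo u v) (hy : y ∈ Set.Ioo u v)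
    (hpos : 0 < h x) : 0 < h y := by
  by_contra hneg
  have hyneg : h y < 0 := lt_of_le_of_ne (not_lt.1 hneg) (hz y hy)
  rcases le_total x y with hle | hle
  · obtain ⟨z, hzmem, hz0⟩ := intermediate_value_Ioo' hle hcont.continuousOn
      (Set.mem_Ioo.2 ⟨hyneg, hpos⟩)
    exact hz z ⟨lt_trans hx.1 hzmem.1, lt_trans hzmem.2 hy.2⟩ hz0
  · obtain ⟨z, hzmem, hz0⟩ := intermediate_value_Ioo hle hcont.continuousOn
      (Set.mem_Ioo.2 ⟨hyneg, hpos⟩)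
    exact hz z ⟨lt_trans hy.1 hzmem.1, lt_trans hzmem.2 hx.2⟩ hz0

lemma mem_pts {l : ℂ} {x : ℝ} (hx0 : 0 ≤ x) (hx2 : x ≤ 2*π)
    (h : Real.cos (x - Complex.arg l) = Real.cos (Real.arcsin (‖l‖))) :
    x = Complex.arg l + Real.arcsin (‖l‖)
    ∨ x = Complex.arg l - Real.arcsin (‖l‖)
    ∨ x = Complex.arg l + Real.arcsin (‖l‖) + 2*π
    ∨ x = Complex.arg l - Real.arcsin (‖l‖) + 2*π := by
  have hπ := Real.pi_pos
  set φ := Complex.arg l with hφdef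
  set c := Real.arcsin (‖l‖) with hcdef
  have hφ1 : -π < φ := Complex.neg_pi_lt_arg l
  have hφ2 : φ ≤ π := Complex.arg_le_pi l
  have hc1 : 0 ≤ c := Real.arcsin_nonneg.2 (norm_nonneg l)
  have hc2 : c ≤ π/2 := Real.arcsin_le_pi_div_two _
  obtain ⟨k, hk | hk⟩ := Real.cos_eq_cos_iff.1 h
  · -- c = 2*k*π + (x - φ), so x = φ + c - 2kπ
    have hk1 : (-1 : ℤ) ≤ k := by
      by_contra hlt
      push_neg at hlt
      have h2 : k ≤ -2 := by omega
      have : (k:ℝ) ≤ -2 := by exact_mod_cast h2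
      nlinarith
    have hk2 : k ≤ 0 := by
      by_contra hlt
      push_neg at hlt
      have : (1:ℝ) ≤ (k:ℝ) := by exact_mod_cast hlt
      nlinarith
    interval_cases k
    · push_cast at hk
      right; right; left; linarith
    · push_cast at hk
      left; linarith
  · -- c = 2*k*π - (x - φ), so x = φ - c + 2kπ
    have hk1 : (0 : ℤ) ≤ k := by
      by_contra hlt
      push_neg at hlt
      have h2 : k ≤ -1 := by omega
      have : (k:ℝ) ≤ -1 := by exact_mod_cast h2
      nlinarith
    have hk2 : k ≤ 1 := by
      by_contra hlt
      push_neg at hlt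
      have : (2:ℝ) ≤ (k:ℝ) := by exact_mod_cast hlt
      nlinarith
    interval_cases k
    · push_cast at hk
      right; left; linarith
    · push_cast at hk
      right; right; right; linarith

lemma sig_eq_of_no_zero (l : ℂ) {u v : ℝ}
    (hz : ∀ t ∈ Set.Ioo u v,
      Real.cos (t - Complex.arg l) ≠ Real.cos (Real.arcsin (‖l‖)))
    {x y : ℝ} (hx : x ∈ Set.Ioo u v) (hy : y ∈ Set.Ioo u v) : sig l x = sig l y := by
  set φ := Complex.arg l
  set c := Real.arcsin (‖l‖)
  have hcont : Continuous (fun t : ℝ => Real.cos (t - φ) - Real.cos c) :=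
    (Real.continuous_cos.comp (continuous_id.sub continuous_const)).sub continuous_const
  have hz' : ∀ t ∈ Set.Ioo u v, Real.cos (t - φ) - Real.cos c ≠ 0 :=
    fun t ht => sub_ne_zero.2 (hz t ht)
  have key : Real.cos c < Real.cos (x - φ) ↔ Real.cos c < Real.cos (y - φ) := by
    constructor
    · intro h
      have := sign_invariance hcont hz' hx hy (sub_pos.2 h)
      linarith
    · intro h
      have := sign_invariance hcont hz' hy hx (sub_pos.2 h)
      linarith
  by_cases h1 : Real.cos c < Real.cos (x - φ)
  · have h2 := key.1 h1
    exact (if_pos h1).trans (if_pos h2).symm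
  · have h2 : ¬ Real.cos c < Real.cos (y - φ) := fun h => h1 (key.2 h)
    exact (if_neg h1).trans (if_neg h2).symm

lemma getD_lt_length {L : List ℝ} {k : ℕ} (h : k < L.length) : L.getD k 0 = L[k]'h := by
  simp [List.getD_eq_getElem?_getD, List.getElem?_eq_getElem h]

lemma finset_partition (P : Finset ℝ) (h0P : (0:ℝ) ∈ P) (h2P : (2*π) ∈ P)
    (hmemP : ∀ x ∈ P, 0 ≤ x ∧ x ≤ 2*π) :
    ∃ (m : ℕ) (a : ℕ → ℝ), a 0 = 0 ∧ a m = 2*π ∧ (∀ j, j < m → a j < a (j+1)) ∧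
      (∀ j, j < m → ∀ x ∈ Set.Ioo (a j) (a (j+1)), x ∉ P) ∧ (∀ j, j ≤ m → a j ∈ P) := by
  have hπ := Real.pi_pos
  have hlen : 0 < (P.sort (· ≤ ·)).length := by
    rw [Finset.length_sort]
    exact Finset.card_pos.2 ⟨0, h0P⟩
  refine ⟨(P.sort (· ≤ ·)).length - 1, fun k => (P.sort (· ≤ ·)).getD k 0, ?_, ?_, ?_, ?_, ?_⟩
  · dsimp only
    rw [getD_lt_length hlen, Finset.sorted_zero_eq_min']
    exact le_antisymm (Finset.min'_le _ _ h0P) (Finset.le_min' _ _ _ fun y hy => (hmemP y hy).1)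
  · dsimp only
    rw [getD_lt_length (Nat.sub_lt hlen one_pos), Finset.sorted_last_eq_max']
    exact le_antisymm (Finset.max'_le _ _ _ fun y hy => (hmemP y hy).2) (Finset.le_max' _ _ h2P)
  · intro j hj
    dsimp only
    rw [getD_lt_length (by omega), getD_lt_length (by omega : j+1 < (P.sort (· ≤ ·)).length)]
    exact List.Pairwise.rel_get_of_lt (Finset.sortedLT_sort P).pairwise (a := ⟨j, by omega⟩)
      (b := ⟨j+1, by omega⟩) (by simp)
  · intro j hj x hx hxP
    dsimp only at hx
    have hxL : x ∈ P.sort (· ≤ ·) := (Finset.mem_sort (α := ℝ) (· ≤ ·)).2 hxP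
    obtain ⟨i, hi⟩ := List.mem_iff_get.1 hxL
    rcases le_or_gt i.val j with hij | hij
    · have hle : x ≤ (P.sort (· ≤ ·)).getD j 0 := by
        rw [getD_lt_length (by omega), ← hi]
        exact List.Pairwise.rel_get_of_le (Finset.pairwise_sort P (· ≤ ·))
          (b := ⟨j, by omega⟩) hij
      exact absurd hx.1 (not_lt.2 hle)
    · have hle : (P.sort (· ≤ ·)).getD (j+1) 0 ≤ x := by
        rw [getD_lt_length (by omega : j+1 < (P.sort (· ≤ ·)).length), ← hi]
        exact List.Pairwise.rel_get_of_le (Finset.pairwise_sort P (· ≤ ·))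
          (a := ⟨j+1, by omega⟩) hij
      exact absurd hx.2 (not_lt.2 hle)
  · intro j hj
    dsimp only
    rw [getD_lt_length (by omega)]
    exact (Finset.mem_sort (α := ℝ) (· ≤ ·)).1 ((P.sort (· ≤ ·)).getElem_mem (by omega))

lemma repr_exists (N : ℕ) (l : ℕ → ℂ) (hl : ∀ n, ‖l n‖ ≤ 1) :
    ∃ (m : ℕ) (cc : ℕ → ℂ) (s : ℕ → ℕ → ℝ),
      (∀ j n, s j n = 1 ∨ s j n = -1) ∧
      (∑ j ∈ Finset.range m, ‖cc j‖) ≤ π / 2 ∧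
      ∀ n, n ≤ N → (∑ j ∈ Finset.range m, (cc j) * (s j n : ℝ)) = l n := by
  classical
  have hπ := Real.pi_pos
  set pts : ℕ → Finset ℝ := fun n =>
    {Complex.arg (l n) + Real.arcsin (‖l n‖),
     Complex.arg (l n) - Real.arcsin (‖l n‖),
     Complex.arg (l n) + Real.arcsin (‖l n‖) + 2*π,
     Complex.arg (l n) - Real.arcsin (‖l n‖) + 2*π} with hpts
  set P : Finset ℝ := insert 0 (insert (2*π)
    (((Finset.range (N+1)).biUnion pts).filter (fun x => 0 ≤ x ∧ x ≤ 2*π))) with hPdef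
  have h0P : (0:ℝ) ∈ P := Finset.mem_insert_self _ _
  have h2P : (2*π) ∈ P := Finset.mem_insert_of_mem (Finset.mem_insert_self _ _)
  have hmemP : ∀ x ∈ P, 0 ≤ x ∧ x ≤ 2*π := by
    intro x hx
    rw [hPdef] at hx
    rcases Finset.mem_insert.1 hx with rfl | hx
    · constructor <;> linarith
    rcases Finset.mem_insert.1 hx with rfl | hx
    · constructor <;> linarith
    exact (Finset.mem_filter.1 hx).2
  obtain ⟨m, a, ha0, ham, hmono, hgap, haP⟩ := finset_partition P h0P h2P hmemP
  have hconst : ∀ j, j < m → ∀ n, n ≤ N → ∀ x ∈ Set.Ioo (a j) (a (j+1)),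
      ∀ y ∈ Set.Ioo (a j) (a (j+1)), sig (l n) x = sig (l n) y := by
    intro j hj n hn x hx y hy
    apply sig_eq_of_no_zero (l n) (u := a j) (v := a (j+1)) ?_ hx hy
    intro t ht hcos
    have h0aj : 0 ≤ a j := (hmemP _ (haP j hj.le)).1
    have h2aj : a (j+1) ≤ 2*π := (hmemP _ (haP (j+1) hj)).2
    have hmem := mem_pts (le_trans h0aj ht.1.le) (le_trans ht.2.le h2aj) hcos
    apply hgap j hj t ht
    rw [hPdef]
    apply Finset.mem_insert_of_mem
    apply Finset.mem_insert_of_mem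
    rw [Finset.mem_filter]
    refine ⟨?_, le_trans h0aj ht.1.le, le_trans ht.2.le h2aj⟩
    rw [Finset.mem_biUnion]
    refine ⟨n, Finset.mem_range.2 (by omega), ?_⟩
    rw [hpts]
    simp only [Finset.mem_insert, Finset.mem_singleton]
    tauto
  refine ⟨m, fun j => (∫ θ in a j..a (j+1), Complex.exp (Complex.I*θ)) / 4,
    fun j n => sig (l n) ((a j + a (j+1))/2), ?_, ?_, ?_⟩
  · intro j n
    simp only [sig, sig0]
    split
    · exact Or.inl rfl
    · exact Or.inr rfl
  · calc ∑ j ∈ Finset.range m,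
        ‖(∫ θ in a j..a (j+1), Complex.exp (Complex.I*θ)) / 4‖
        ≤ ∑ j ∈ Finset.range m, (a (j+1) - a j)/4 := by
          apply Finset.sum_le_sum
          intro j hj
          have hj' := Finset.mem_range.1 hj
          rw [norm_div]
          simp only [Complex.norm_ofNat]
          gcongr
          have hb : ‖∫ θ in a j..a (j+1), Complex.exp (Complex.I*θ)‖
              ≤ 1 * |a (j+1) - a j| := by
            apply intervalIntegral.norm_integral_le_of_norm_le_const
            intro x _
            rw [mul_comm, Complex.norm_exp_ofReal_mul_I]
          rw [one_mul, _root_.abs_of_nonneg (sub_nonneg.2 (hmono j hj').le)] at hb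
          exact hb
      _ = π/2 := by
          rw [← Finset.sum_div, Finset.sum_range_sub (f := a), ha0, ham]
          ring
  · intro n hn
    have key : ∀ j ∈ Finset.range m,
        ((∫ θ in a j..a (j+1), Complex.exp (Complex.I*θ)) / 4) * (sig (l n) ((a j + a (j+1))/2) : ℝ)
        = (∫ θ in a j..a (j+1), (sig (l n) θ : ℂ) * Complex.exp (Complex.I*θ)) / 4 := by
      intro j hj
      have hj' := Finset.mem_range.1 hj
      rw [div_mul_eq_mul_div]
      congr 1
      rw [← intervalIntegral.integral_mul_const]
      apply intervalIntegral.integral_congr_ae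
      have hae : ∀ᵐ θ : ℝ, θ ≠ a (j+1) := by
        rw [ae_iff]
        simpa using measure_singleton (a (j+1))
      filter_upwards [hae] with θ hne hmem
      rw [Set.uIoc_of_le (hmono j hj').le] at hmem
      have hIoo : θ ∈ Set.Ioo (a j) (a (j+1)) := ⟨hmem.1, lt_of_le_of_ne hmem.2 hne⟩
      have hmid : (a j + a (j+1))/2 ∈ Set.Ioo (a j) (a (j+1)) := by
        have := hmono j hj'
        constructor
        · linarith
        · linarith
      rw [hconst j hj' n hn _ hmid θ hIoo]
      ring
    rw [Finset.sum_congr rfl key, ← Finset.sum_div,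
      intervalIntegral.sum_integral_adjacent_intervals
        (fun k _ => sig_intInt (l n) (a k) (a (k+1))),
      ha0, ham, sig_integral (l n) (hl n)]
    ring

lemma admissible_transfer {X : Type} [NormedAddCommGroup X] [NormedSpace ℂ X]
    [NormedSpace ℝ X] [CompleteSpace X]
    {p : ℝ} (hp : 1 < p) {A : Set ℂ} {β : ℝ≥0∞} (hβ : UMDAdmissible ℂ X p A β)
    {a b : ℂ} (ha : a ∈ A) (hb : b ∈ A) (hab : a ≠ b) :
    UMDAdmissible ℂ X p (Metric.closedBall 0 1)
      (ENNReal.ofReal (π / ‖a - b‖) * β) := by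
  intro Ω m μ hμ ℱ f hf hf2 N ε hε
  have hq1 : 1 ≤ ENNReal.ofReal p := by
    rw [ENNReal.one_le_ofReal]
    exact hp.le
  have hab0 : (a - b) ≠ 0 := sub_ne_zero.2 hab
  have habs : 0 < ‖a - b‖ := norm_pos_iff.2 hab0
  have hl : ∀ n, ‖ε n‖ ≤ 1 := by
    intro n
    have h := hε n
    rwa [Metric.mem_closedBall, Complex.dist_eq, sub_zero] at h
  obtain ⟨m0, cc, s, hs, hsum, hrepr⟩ := repr_exists N ε hl
  set q := ENNReal.ofReal p with hq
  have hd : ∀ k, MemLp (mdiff f k) q μ := by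
    intro k
    unfold mdiff
    by_cases hk : k = 0
    · simpa [hk] using hf2 0
    · simp only [hk, if_false]
      exact (hf2 k).sub (hf2 (k-1))
  set εa : ℕ → ℕ → ℂ := fun j n => if s j n = 1 then a else b with hεa
  set εb : ℕ → ℕ → ℂ := fun j n => if s j n = 1 then b else a with hεb
  have hεaA : ∀ j n, εa j n ∈ A := by
    intro j n; rw [hεa]; dsimp only; split <;> assumption
  have hεbA : ∀ j n, εb j n ∈ A := by
    intro j n; rw [hεb]; dsimp only; split <;> assumption
  have hdiff : ∀ j k, εa j k - εb j k = ((s j k : ℝ) : ℂ) * (a - b) := by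
    intro j k
    rcases hs j k with h1 | h1 <;> rw [hεa, hεb] <;> dsimp only <;> rw [h1]
    · norm_num
    · norm_num
  set Ta : ℕ → Ω → X := fun j ω => ∑ k ∈ Finset.range (N+1), εa j k • mdiff f k ω with hTa
  set Tb : ℕ → Ω → X := fun j ω => ∑ k ∈ Finset.range (N+1), εb j k • mdiff f k ω with hTb
  have hTa_asm : ∀ j, AEStronglyMeasurable (Ta j) μ := by
    intro j
    rw [hTa]
    apply Finset.aestronglyMeasurable_fun_sum
    intro k _
    exact ((hd k).aestronglyMeasurable).const_smul (εa j k)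
  have hTb_asm : ∀ j, AEStronglyMeasurable (Tb j) μ := by
    intro j
    rw [hTb]
    apply Finset.aestronglyMeasurable_fun_sum
    intro k _
    exact ((hd k).aestronglyMeasurable).const_smul (εb j k)
  have hkey : (fun ω => ∑ k ∈ Finset.range (N + 1), ε k • mdiff f k ω)
      = ∑ j ∈ Finset.range m0, (cc j / (a-b)) • (Ta j - Tb j) := by
    funext ω
    have step1 : ∀ j, (cc j / (a-b)) • (Ta j ω - Tb j ω)
        = ∑ k ∈ Finset.range (N+1), ((cc j) * ((s j k : ℝ):ℂ)) • mdiff f k ω := by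
      intro j
      show (cc j / (a-b)) • ((∑ k ∈ Finset.range (N+1), εa j k • mdiff f k ω)
          - ∑ k ∈ Finset.range (N+1), εb j k • mdiff f k ω) = _
      rw [← Finset.sum_sub_distrib, Finset.smul_sum]
      apply Finset.sum_congr rfl
      intro k _
      rw [← sub_smul, hdiff j k, smul_smul]
      congr 1
      field_simp
    calc (fun ω => ∑ k ∈ Finset.range (N + 1), ε k • mdiff f k ω) ω
        = ∑ k ∈ Finset.range (N+1), ε k • mdiff f k ω := rfl
      _ = ∑ k ∈ Finset.range (N+1), ∑ j ∈ Finset.range m0,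
            ((cc j) * ((s j k : ℝ):ℂ)) • mdiff f k ω := by
          apply Finset.sum_congr rfl
          intro k hk
          rw [← Finset.sum_smul, hrepr k (Nat.lt_succ_iff.1 (Finset.mem_range.1 hk))]
      _ = ∑ j ∈ Finset.range m0, ∑ k ∈ Finset.range (N+1),
            ((cc j) * ((s j k : ℝ):ℂ)) • mdiff f k ω := Finset.sum_comm
      _ = ∑ j ∈ Finset.range m0, (cc j / (a-b)) • (Ta j ω - Tb j ω) :=
          (Finset.sum_congr rfl (fun j _ => (step1 j).symm))
      _ = (∑ j ∈ Finset.range m0, (cc j / (a-b)) • (Ta j - Tb j)) ω := by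
          rw [Finset.sum_apply]
          rfl
  rw [hkey]
  have hterm : ∀ j ∈ Finset.range m0,
      eLpNorm ((cc j / (a-b)) • (Ta j - Tb j)) q μ
      ≤ ENNReal.ofReal (‖cc j‖ / ‖a-b‖)
        * (2 * (β * eLpNorm (f N) q μ)) := by
    intro j _
    rw [eLpNorm_const_smul]
    have hcoe : ‖cc j / (a-b)‖ₑ
        = ENNReal.ofReal (‖cc j‖ / ‖a-b‖) := by
      rw [← ofReal_norm, norm_div]
    rw [hcoe]
    apply mul_le_mul_right
    calc eLpNorm (Ta j - Tb j) q μ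
        ≤ eLpNorm (Ta j) q μ + eLpNorm (Tb j) q μ :=
          eLpNorm_sub_le (hTa_asm j) (hTb_asm j) hq1
      _ ≤ β * eLpNorm (f N) q μ + β * eLpNorm (f N) q μ := by
          apply add_le_add
          · exact hβ Ω m μ hμ ℱ f hf hf2 N (εa j) (hεaA j)
          · exact hβ Ω m μ hμ ℱ f hf hf2 N (εb j) (hεbA j)
      _ = 2 * (β * eLpNorm (f N) q μ) := by ring
  calc eLpNorm (∑ j ∈ Finset.range m0, (cc j / (a-b)) • (Ta j - Tb j)) q μ
      ≤ ∑ j ∈ Finset.range m0, eLpNorm ((cc j / (a-b)) • (Ta j - Tb j)) q μ := by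
        apply eLpNorm_sum_le ?_ hq1
        intro j _
        exact (((hTa_asm j).sub (hTb_asm j)).const_smul _)
    _ ≤ ∑ j ∈ Finset.range m0, ENNReal.ofReal (‖cc j‖ / ‖a-b‖)
          * (2 * (β * eLpNorm (f N) q μ)) := Finset.sum_le_sum hterm
    _ = (∑ j ∈ Finset.range m0, ENNReal.ofReal (‖cc j‖ / ‖a-b‖))
          * (2 * (β * eLpNorm (f N) q μ)) := (Finset.sum_mul _ _ _).symm
    _ ≤ ENNReal.ofReal ((π/2) / ‖a-b‖) * (2 * (β * eLpNorm (f N) q μ)) := by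
        apply mul_le_mul_left
        rw [← ENNReal.ofReal_sum_of_nonneg (fun j _ => by positivity)]
        apply ENNReal.ofReal_le_ofReal
        rw [← Finset.sum_div]
        gcongr
    _ = ENNReal.ofReal (π / ‖a-b‖) * β * eLpNorm (f N) q μ := by
        rw [← mul_assoc, ← mul_assoc]
        congr 2
        rw [show (2:ℝ≥0∞) = ENNReal.ofReal 2 by norm_num, ← ENNReal.ofReal_mul (by positivity)]
        congr 1
        field_simp

lemma norm_le_admissible {X : Type} [NormedAddCommGroup X] [NormedSpace ℂ X]
    [NormedSpace ℝ X] [CompleteSpace X] [Nontrivial X]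
    {p : ℝ} (hp : 1 < p) {A : Set ℂ} {β : ℝ≥0∞} (hβ : UMDAdmissible ℂ X p A β)
    {a : ℂ} (ha : a ∈ A) : (‖a‖₊ : ℝ≥0∞) ≤ β := by
  obtain ⟨x, hx⟩ := exists_ne (0 : X)
  have key := hβ Unit inferInstance (Measure.dirac ()) inferInstance
    (Filtration.const ℕ inferInstance le_rfl) (fun _ _ => x)
    (martingale_const _ _ x) (fun _ => memLp_const x) 0 (fun _ => a) (fun _ => ha)
  have e1 : (fun ω : Unit => ∑ k ∈ Finset.range (0+1), a • mdiff (fun _ _ => x) k ω)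
      = fun _ : Unit => a • x := by
    funext ω
    simp [mdiff]
  rw [e1] at key
  have hq0 : ENNReal.ofReal p ≠ 0 := (ENNReal.ofReal_pos.2 (by linarith)).ne'
  have hμ0 : (Measure.dirac () : Measure Unit) ≠ 0 := IsProbabilityMeasure.ne_zero _
  rw [eLpNorm_const _ hq0 hμ0, eLpNorm_const _ hq0 hμ0] at key
  simp only [measure_univ, ENNReal.one_rpow, mul_one] at key
  rw [enorm_smul] at key
  have hxne : ‖x‖ₑ ≠ 0 := by
    simp [hx]
  exact (ENNReal.mul_le_mul_iff_left hxne enorm_ne_top).1 key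

theorem umdConst_lower_bound (X : Type) [NormedAddCommGroup X]
    [NormedSpace ℂ X] [NormedSpace ℝ X] [CompleteSpace X] [Nontrivial X]
    (p : ℝ) (hp : 1 < p) (A : Set ℂ) (hA : Bornology.IsBounded A) :
    max (ENNReal.ofReal (1 / Real.pi) * EMetric.diam A *
        umdConst ℂ X p (Metric.closedBall (0 : ℂ) 1))
      (⨆ a ∈ A, (‖a‖₊ : ℝ≥0∞)) ≤ umdConst ℂ X p A := by
  have hπ := Real.pi_pos
  apply max_le
  · unfold umdConst
    apply le_sInf
    intro β hβ
    simp only [Set.mem_setOf_eq] at hβ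
    have hdiam : EMetric.diam A = ⨆ x ∈ A, ⨆ y ∈ A, edist x y := rfl
    rw [hdiam]
    simp only [ENNReal.mul_iSup, ENNReal.iSup_mul]
    apply iSup₂_le
    intro x hx
    apply iSup₂_le
    intro y hy
    rcases eq_or_ne x y with rfl | hne
    · simp
    · have hd0 : 0 < ‖x - y‖ := norm_pos_iff.2 (sub_ne_zero.2 hne)
      have h1 : sInf {β : ℝ≥0∞ | UMDAdmissible ℂ X p (Metric.closedBall (0:ℂ) 1) β}
          ≤ ENNReal.ofReal (π / ‖x - y‖) * β :=
        sInf_le (admissible_transfer hp hβ hx hy hne)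
      calc ENNReal.ofReal (1 / π) * edist x y *
            sInf {β : ℝ≥0∞ | UMDAdmissible ℂ X p (Metric.closedBall (0:ℂ) 1) β}
          ≤ ENNReal.ofReal (1 / π) * edist x y
            * (ENNReal.ofReal (π / ‖x - y‖) * β) := mul_le_mul_right h1 _
        _ = β := by
            rw [edist_dist, Complex.dist_eq, ← mul_assoc,
              ← ENNReal.ofReal_mul (by positivity), ← ENNReal.ofReal_mul (by positivity),
              show 1 / π * ‖x - y‖ * (π / ‖x - y‖) = 1 by
                field_simp]
            simp
  · unfold umdConst
    apply le_sInf
    intro β hβ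
    simp only [Set.mem_setOf_eq] at hβ
    exact iSup₂_le fun a ha => norm_le_admissible hp hβ ha

end Aux
end

section
/- Let b < B be real numbers and X a Banach space over any scalar field K, 1<p<∞. Then max{ ((B-b)/2)·β_{p,X}^{\{-1,1\}}, |b|, |B| } ≤ β_{p,X}^{\{b,B\}} ≤ ((B-b)/2)·β_{p,X}^{\{-1,1\}} + |B+b|/2. -/
open MeasureTheory Filter Set
open scoped ENNReal NNReal Topology

section Aux

set_option linter.unusedSectionVars false

variable {𝕜 X : Type} [RCLike 𝕜] [NormedAddCommGroup X]
    [NormedSpace 𝕜 X] [NormedSpace ℝ X] [CompleteSpace X] {p : ℝ}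

lemma mdiff_sum {Ω : Type} (f : ℕ → Ω → X) (N : ℕ) (ω : Ω) :
    ∑ k ∈ Finset.range (N + 1), mdiff f k ω = f N ω := by
  induction N with
  | zero => simp [mdiff]
  | succ n ih => rw [Finset.sum_range_succ, ih]; simp [mdiff]

lemma transform_aesm {Ω : Type} {m : MeasurableSpace Ω} {μ : Measure Ω} {f : ℕ → Ω → X}
    (hf : ∀ n, AEStronglyMeasurable (f n) μ) (N : ℕ) (ε : ℕ → 𝕜) :
    AEStronglyMeasurable (fun ω => ∑ k ∈ Finset.range (N + 1), ε k • mdiff f k ω) μ := by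
  apply Finset.aestronglyMeasurable_fun_sum
  intro k _
  apply AEStronglyMeasurable.const_smul
  by_cases hk : k = 0
  · simpa [mdiff, hk] using hf 0
  · simpa [mdiff, hk] using (hf k).sub (hf (k - 1))

lemma coe_nnnorm_real_cast (r : ℝ) :
    (‖((r : ℝ) : 𝕜)‖₊ : ℝ≥0∞) = ENNReal.ofReal |r| := by
  show ‖((r : ℝ) : 𝕜)‖ₑ = _
  rw [← ofReal_norm, RCLike.norm_ofReal]

lemma transform_eLpNorm_eq_zero {Ω : Type} {m : MeasurableSpace Ω} {μ : Measure Ω}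
    {ℱ : Filtration ℕ m} {f : ℕ → Ω → X} (hf : Martingale f ℱ μ)
    {q : ℝ≥0∞} (hq : q ≠ 0) {N : ℕ} (h0 : eLpNorm (f N) q μ = 0) (ε : ℕ → 𝕜) :
    eLpNorm (fun ω => ∑ k ∈ Finset.range (N + 1), ε k • mdiff f k ω) q μ = 0 := by
  have hNm : AEStronglyMeasurable (f N) μ :=
    ((hf.stronglyAdapted N).mono (ℱ.le N)).aestronglyMeasurable
  have hN : f N =ᵐ[μ] 0 := (eLpNorm_eq_zero_iff hNm hq).1 h0
  have hn : ∀ n : ℕ, ∀ᵐ ω ∂μ, n ≤ N → f n ω = 0 := by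
    intro n
    by_cases h : n ≤ N
    · have h1 : f n =ᵐ[μ] μ[f N | ℱ n] := (hf.condExp_ae_eq h).symm
      have h2 : μ[f N | ℱ n] =ᵐ[μ] μ[(0 : Ω → X) | ℱ n] := condExp_congr_ae hN
      rw [condExp_zero] at h2
      filter_upwards [h1.trans h2] with ω hω _ using hω
    · filter_upwards with ω hn
      exact absurd hn h
  have hall : ∀ᵐ ω ∂μ, ∀ n : ℕ, n ≤ N → f n ω = 0 := ae_all_iff.2 hn
  have : (fun ω => ∑ k ∈ Finset.range (N + 1), ε k • mdiff f k ω) =ᵐ[μ] (0 : Ω → X) := by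
    filter_upwards [hall] with ω hω
    simp only [Pi.zero_apply]
    apply Finset.sum_eq_zero
    intro k hk
    have hkN : k ≤ N := Nat.lt_succ_iff.1 (Finset.mem_range.1 hk)
    have hz : mdiff f k ω = 0 := by
      by_cases hk0 : k = 0
      · simp [mdiff, hk0, hω 0 (Nat.zero_le _)]
      · have hk1 : k - 1 ≤ N := le_trans (Nat.sub_le _ _) hkN
        simp [mdiff, hk0, hω k hkN, hω (k - 1) hk1]
    simp [hz]
  rw [eLpNorm_congr_ae this, eLpNorm_zero]

lemma ofReal_p_ne_zero (hp : 1 < p) : ENNReal.ofReal p ≠ 0 := by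
  simp only [ne_eq, ENNReal.ofReal_eq_zero, not_le]; linarith

lemma umdConst_admissible (hp : 1 < p) (A : Set 𝕜) :
    UMDAdmissible 𝕜 X p A (umdConst 𝕜 X p A) := by
  intro Ω m μ hμ ℱ f hf hfp N ε hε
  have hclt : eLpNorm (f N) (ENNReal.ofReal p) μ ≠ ⊤ := (hfp N).2.ne
  by_cases h0 : eLpNorm (f N) (ENNReal.ofReal p) μ = 0
  · rw [h0, mul_zero, transform_eLpNorm_eq_zero hf (ofReal_p_ne_zero hp) h0 ε]
  · rw [← ENNReal.div_le_iff_le_mul (Or.inl h0) (Or.inl hclt)]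
    refine le_sInf fun β hβ => ?_
    rw [ENNReal.div_le_iff_le_mul (Or.inl h0) (Or.inl hclt)]
    exact hβ Ω m μ hμ ℱ f hf hfp N ε hε

lemma norm_mem_le [Nontrivial X] (hp : 1 < p) {A : Set 𝕜} {β : ℝ≥0∞}
    (hβ : UMDAdmissible 𝕜 X p A β) {a : 𝕜} (ha : a ∈ A) : (‖a‖₊ : ℝ≥0∞) ≤ β := by
  obtain ⟨x, hx⟩ := exists_ne (0 : X)
  set μ : Measure Unit := Measure.dirac ()
  have hmart : Martingale (fun _ _ => x : ℕ → Unit → X)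
      ⟨fun _ => ⊤, monotone_const, fun _ => le_rfl⟩ μ := by
    constructor
    · intro n
      exact stronglyMeasurable_const
    · intro i j hij
      exact EventuallyEq.of_eq
        (condExp_of_stronglyMeasurable le_rfl stronglyMeasurable_const (integrable_const x))
  have key := hβ Unit ⊤ μ (by infer_instance)
    ⟨fun _ => ⊤, monotone_const, fun _ => le_rfl⟩ (fun _ _ => x) hmart
    (fun _ => memLp_const x) 0 (fun _ => a) (fun _ => ha)
  have hμ0 : μ ≠ 0 := IsProbabilityMeasure.ne_zero μ
  have hq : ENNReal.ofReal p ≠ 0 := ofReal_p_ne_zero hp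
  rw [eLpNorm_const x hq hμ0] at key
  have hL : (fun ω : Unit => ∑ k ∈ Finset.range (0 + 1), (fun _ : ℕ => a) k •
      mdiff (fun _ _ => x : ℕ → Unit → X) k ω) = fun _ : Unit => a • x := by
    funext ω
    simp [mdiff]
  rw [hL, eLpNorm_const (a • x) hq hμ0] at key
  simp only [measure_univ, ENNReal.one_rpow, mul_one, enorm_smul, ENNReal.coe_mul] at key
  have hxne : (‖x‖₊ : ℝ≥0∞) ≠ 0 := by simpa using hx
  exact (ENNReal.mul_le_mul_iff_left hxne ENNReal.coe_ne_top).1 key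

lemma upper_transfer (hp : 1 < p) {β : ℝ≥0∞}
    (hβ : UMDAdmissible 𝕜 X p {-1, 1} β) {b B : ℝ} (hbB : b < B) :
    UMDAdmissible 𝕜 X p {(b : 𝕜), (B : 𝕜)}
      (ENNReal.ofReal ((B - b) / 2) * β + ENNReal.ofReal (|B + b| / 2)) := by
  intro Ω m μ hμ ℱ f hf hfp N ε hε
  set q := ENNReal.ofReal p with hqdef
  have hq1 : 1 ≤ q := by rw [hqdef, ENNReal.one_le_ofReal]; linarith
  set σ : ℕ → 𝕜 := fun k => if ε k = (B : 𝕜) then 1 else -1 with hσ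
  have hσmem : ∀ n, σ n ∈ ({-1, 1} : Set 𝕜) := by
    intro n; by_cases h : ε n = (B : 𝕜) <;> simp [hσ, h]
  have hbB' : (b : 𝕜) ≠ (B : 𝕜) := by
    simpa using hbB.ne
  have hεeq : ∀ k, ε k = (((B - b) / 2 : ℝ) : 𝕜) * σ k + (((B + b) / 2 : ℝ) : 𝕜) := by
    intro k
    rcases Set.mem_insert_iff.1 (hε k) with h | h
    · have hσk : σ k = -1 := by simp [hσ, h, hbB']
      rw [h, hσk]; push_cast; ring
    · rw [Set.mem_singleton_iff] at h
      have hσk : σ k = 1 := by simp [hσ, h]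
      rw [h, hσk]; push_cast; ring
  have hpt : (fun ω => ∑ k ∈ Finset.range (N + 1), ε k • mdiff f k ω)
      = (((((B - b) / 2 : ℝ) : 𝕜)) • fun ω => ∑ k ∈ Finset.range (N + 1), σ k • mdiff f k ω)
        + ((((B + b) / 2 : ℝ) : 𝕜) • f N) := by
    funext ω
    simp only [Pi.add_apply, Pi.smul_apply]
    rw [← mdiff_sum f N ω, Finset.smul_sum, Finset.smul_sum, ← Finset.sum_add_distrib]
    refine Finset.sum_congr rfl fun k _ => ?_
    rw [hεeq k, add_smul, mul_smul]
  have hm1 : AEStronglyMeasurable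
      (fun ω => ∑ k ∈ Finset.range (N + 1), σ k • mdiff f k ω) μ :=
    transform_aesm (fun n => (hfp n).1) N σ
  have hm2 : AEStronglyMeasurable (f N) μ := (hfp N).1
  rw [hpt]
  calc eLpNorm _ q μ
      ≤ eLpNorm ((((B - b) / 2 : ℝ) : 𝕜) • fun ω =>
            ∑ k ∈ Finset.range (N + 1), σ k • mdiff f k ω) q μ
        + eLpNorm ((((B + b) / 2 : ℝ) : 𝕜) • f N) q μ :=
      eLpNorm_add_le (hm1.const_smul _) (hm2.const_smul _) hq1
    _ = ENNReal.ofReal ((B - b) / 2) *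
          eLpNorm (fun ω => ∑ k ∈ Finset.range (N + 1), σ k • mdiff f k ω) q μ
        + ENNReal.ofReal (|B + b| / 2) * eLpNorm (f N) q μ := by
      rw [eLpNorm_const_smul, eLpNorm_const_smul, enorm_eq_nnnorm, enorm_eq_nnnorm, coe_nnnorm_real_cast, coe_nnnorm_real_cast,
        abs_of_pos (by linarith : (0:ℝ) < (B - b) / 2), abs_div, abs_two]
    _ ≤ ENNReal.ofReal ((B - b) / 2) * (β * eLpNorm (f N) q μ)
        + ENNReal.ofReal (|B + b| / 2) * eLpNorm (f N) q μ := by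
      gcongr
      exact hβ Ω m μ hμ ℱ f hf hfp N σ hσmem
    _ = (ENNReal.ofReal ((B - b) / 2) * β + ENNReal.ofReal (|B + b| / 2))
        * eLpNorm (f N) q μ := by ring

lemma lower_transfer (hp : 1 < p) {β : ℝ≥0∞} {b B : ℝ} (hbB : b < B)
    (hβ : UMDAdmissible 𝕜 X p {(b : 𝕜), (B : 𝕜)} β) :
    UMDAdmissible 𝕜 X p {-1, 1} (ENNReal.ofReal (2 / (B - b)) * β) := by
  intro Ω m μ hμ ℱ f hf hfp N σ hσ
  set q := ENNReal.ofReal p with hqdef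
  have hq1 : 1 ≤ q := by rw [hqdef, ENNReal.one_le_ofReal]; linarith
  have hBb : ((B : ℝ) - b) ≠ 0 := by linarith
  have hBb' : ((B : 𝕜) - (b : 𝕜)) ≠ 0 :=
    sub_ne_zero.mpr (by simpa using hbB.ne')
  set ε : ℕ → 𝕜 := fun k => if σ k = 1 then (B : 𝕜) else (b : 𝕜) with hε
  set ε' : ℕ → 𝕜 := fun k => if σ k = 1 then (b : 𝕜) else (B : 𝕜) with hε'
  have hεmem : ∀ n, ε n ∈ ({(b : 𝕜), (B : 𝕜)} : Set 𝕜) := by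
    intro n; by_cases h : σ n = 1 <;> simp [hε, h]
  have hε'mem : ∀ n, ε' n ∈ ({(b : 𝕜), (B : 𝕜)} : Set 𝕜) := by
    intro n; by_cases h : σ n = 1 <;> simp [hε', h]
  have hσeq : ∀ k, σ k = ((((B - b)⁻¹ : ℝ)) : 𝕜) * (ε k - ε' k) := by
    intro k
    rcases Set.mem_insert_iff.1 (hσ k) with h | h
    · have hne : σ k ≠ 1 := by rw [h]; intro hc; norm_num at hc
      rw [h]
      simp only [hε, hε', if_neg hne]
      push_cast
      rw [mul_sub]
      field_simp
      ring
    · rw [Set.mem_singleton_iff] at h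
      rw [h]
      simp only [hε, hε', if_pos h]
      push_cast
      rw [mul_sub]
      field_simp
  have hpt : (fun ω => ∑ k ∈ Finset.range (N + 1), σ k • mdiff f k ω)
      = ((((B - b)⁻¹ : ℝ) : 𝕜) •
        ((fun ω => ∑ k ∈ Finset.range (N + 1), ε k • mdiff f k ω)
          - fun ω => ∑ k ∈ Finset.range (N + 1), ε' k • mdiff f k ω)) := by
    funext ω
    simp only [Pi.smul_apply, Pi.sub_apply]
    rw [← Finset.sum_sub_distrib, Finset.smul_sum]
    refine Finset.sum_congr rfl fun k _ => ?_
    rw [hσeq k, ← sub_smul, mul_smul]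
  have hm1 : AEStronglyMeasurable
      (fun ω => ∑ k ∈ Finset.range (N + 1), ε k • mdiff f k ω) μ :=
    transform_aesm (fun n => (hfp n).1) N ε
  have hm2 : AEStronglyMeasurable
      (fun ω => ∑ k ∈ Finset.range (N + 1), ε' k • mdiff f k ω) μ :=
    transform_aesm (fun n => (hfp n).1) N ε'
  rw [hpt, eLpNorm_const_smul, enorm_eq_nnnorm, coe_nnnorm_real_cast,
    abs_of_pos (inv_pos.2 (by linarith : (0:ℝ) < B - b))]
  calc ENNReal.ofReal (B - b)⁻¹ * eLpNorm _ q μ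
      ≤ ENNReal.ofReal (B - b)⁻¹ *
        (eLpNorm (fun ω => ∑ k ∈ Finset.range (N + 1), ε k • mdiff f k ω) q μ
          + eLpNorm (fun ω => ∑ k ∈ Finset.range (N + 1), ε' k • mdiff f k ω) q μ) :=
        mul_le_mul_right (eLpNorm_sub_le hm1 hm2 hq1) _
    _ ≤ ENNReal.ofReal (B - b)⁻¹ *
        (β * eLpNorm (f N) q μ + β * eLpNorm (f N) q μ) :=
      mul_le_mul_right (add_le_add (hβ Ω m μ hμ ℱ f hf hfp N ε hεmem)
        (hβ Ω m μ hμ ℱ f hf hfp N ε' hε'mem)) _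
    _ = (ENNReal.ofReal (B - b)⁻¹ * 2) * (β * eLpNorm (f N) q μ) := by ring
    _ = ENNReal.ofReal (2 / (B - b)) * β * eLpNorm (f N) q μ := by
      rw [show (2 : ℝ≥0∞) = ENNReal.ofReal (2 : ℝ) by norm_num,
        ← ENNReal.ofReal_mul (inv_nonneg.2 (by linarith))]
      rw [show (B - b)⁻¹ * 2 = 2 / (B - b) by ring]
      ring

end Aux

theorem umdConst_pair_real_bounds (𝕜 : Type) [RCLike 𝕜] (X : Type) [NormedAddCommGroup X]
    [NormedSpace 𝕜 X] [NormedSpace ℝ X] [CompleteSpace X] (p : ℝ) (hp : 1 < p)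
    [Nontrivial X] (b B : ℝ) (hbB : b < B) :
    max (max (ENNReal.ofReal ((B - b) / 2) * umdConst 𝕜 X p {-1, 1})
        (ENNReal.ofReal |b|)) (ENNReal.ofReal |B|)
      ≤ umdConst 𝕜 X p {(b : 𝕜), (B : 𝕜)} ∧
    umdConst 𝕜 X p {(b : 𝕜), (B : 𝕜)} ≤
      ENNReal.ofReal ((B - b) / 2) * umdConst 𝕜 X p {-1, 1} +
        ENNReal.ofReal (|B + b| / 2) := by
  constructor
  · refine le_sInf fun β hβ => ?_
    refine max_le (max_le ?_ ?_) ?_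
    · have h1 : umdConst 𝕜 X p {-1, 1} ≤ ENNReal.ofReal (2 / (B - b)) * β :=
        sInf_le (lower_transfer hp hbB hβ)
      calc ENNReal.ofReal ((B - b) / 2) * umdConst 𝕜 X p {-1, 1}
          ≤ ENNReal.ofReal ((B - b) / 2) * (ENNReal.ofReal (2 / (B - b)) * β) :=
          mul_le_mul_right h1 _
        _ = (ENNReal.ofReal ((B - b) / 2) * ENNReal.ofReal (2 / (B - b))) * β :=
          (mul_assoc _ _ _).symm
        _ = β := by
          rw [← ENNReal.ofReal_mul (by linarith),
            show (B - b) / 2 * (2 / (B - b)) = 1 by field_simp [sub_ne_zero.mpr hbB.ne']]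
          simp
    · have h := norm_mem_le hp hβ (Set.mem_insert _ _)
      rwa [coe_nnnorm_real_cast] at h
    · have h := norm_mem_le hp hβ
        (Set.mem_insert_iff.2 (Or.inr (Set.mem_singleton _)))
      rwa [coe_nnnorm_real_cast] at h
  · exact sInf_le (upper_transfer hp (umdConst_admissible hp _) hbB)
end

section
/- Let X be a Banach space, 1<p<∞, A ⊆ K convex, closed, bounded, containing at least two points, and let a₁, a₂ ∈ A be distinct. Suppose U : X × X → ℝ is such that z ↦ U(x+z, y+εz) is concave in z for each x, y ∈ X and each ε ∈ A. Define V(x,y) := U((x−y)/2, (a₂x − a₁y)/2). Then V is biconcave, i.e. x ↦ V(x,y) and y ↦ V(x,y) are each concave. -/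
open MeasureTheory Filter Set
open scoped ENNReal NNReal Topology

lemma half_smul_comm {𝕜 X : Type} [RCLike 𝕜] [NormedAddCommGroup X]
    [NormedSpace 𝕜 X] [NormedSpace ℝ X] (c : 𝕜) (v : X) :
    (2 : ℝ)⁻¹ • (c • v) = c • ((2 : ℝ)⁻¹ • v) := by
  have hv : v = ((2:ℝ)⁻¹ • v) + ((2:ℝ)⁻¹ • v) := by
    rw [← two_smul ℝ, smul_smul]; norm_num
  calc (2 : ℝ)⁻¹ • (c • v) = (2:ℝ)⁻¹ • (c • ((2:ℝ)⁻¹ • v) + c • ((2:ℝ)⁻¹ • v)) := by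
        nth_rewrite 1 [hv]; rw [smul_add]
    _ = (2:ℝ)⁻¹ • ((2:ℝ) • (c • ((2:ℝ)⁻¹ • v))) := by rw [two_smul]
    _ = c • ((2:ℝ)⁻¹ • v) := by rw [smul_smul]; norm_num

theorem biconcave_V (𝕜 : Type) [RCLike 𝕜] (X : Type) [NormedAddCommGroup X]
    [NormedSpace 𝕜 X] [NormedSpace ℝ X]
    (A : Set 𝕜) (hconv : Convex ℝ A) (hclosed : IsClosed A)
    (hbdd : Bornology.IsBounded A)
    (a₁ a₂ : 𝕜) (ha₁ : a₁ ∈ A) (ha₂ : a₂ ∈ A) (hne : a₁ ≠ a₂)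
    (U : X × X → ℝ)
    (hU : ∀ (x y : X), ∀ ε ∈ A,
      ConcaveOn ℝ Set.univ (fun z : X => U (x + z, y + ε • z))) :
    (∀ y : X, ConcaveOn ℝ Set.univ
      (fun x : X => U ((2 : ℝ)⁻¹ • (x - y), (2 : ℝ)⁻¹ • (a₂ • x - a₁ • y)))) ∧
    (∀ x : X, ConcaveOn ℝ Set.univ
      (fun y : X => U ((2 : ℝ)⁻¹ • (x - y), (2 : ℝ)⁻¹ • (a₂ • x - a₁ • y)))) := by
  constructor
  · intro y
    have h := ((hU (-(((2:ℝ)⁻¹) • y)) (-(((2:ℝ)⁻¹) • (a₁ • y))) a₂ ha₂).comp_affineMap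
      (((2:ℝ)⁻¹ • (LinearMap.id : X →ₗ[ℝ] X)).toAffineMap))
    have heq : (fun x : X => U ((2 : ℝ)⁻¹ • (x - y), (2 : ℝ)⁻¹ • (a₂ • x - a₁ • y)))
        = (fun z : X => U (-(((2:ℝ)⁻¹) • y) + z, -(((2:ℝ)⁻¹) • (a₁ • y)) + a₂ • z)) ∘
          (((2:ℝ)⁻¹ • (LinearMap.id : X →ₗ[ℝ] X)).toAffineMap) := by
      funext x
      simp only [Function.comp_apply, LinearMap.coe_toAffineMap, LinearMap.smul_apply,
        LinearMap.id_coe, id_eq]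
      congr 1
      refine Prod.ext ?_ ?_
      · simp only [smul_sub]; abel
      · simp only [smul_sub, half_smul_comm]; abel
    rw [heq]
    simpa using h
  · intro x
    have h := ((hU (((2:ℝ)⁻¹) • x) (((2:ℝ)⁻¹) • (a₂ • x)) a₁ ha₁).comp_affineMap
      ((-(2:ℝ)⁻¹ • (LinearMap.id : X →ₗ[ℝ] X)).toAffineMap))
    have heq : (fun y : X => U ((2 : ℝ)⁻¹ • (x - y), (2 : ℝ)⁻¹ • (a₂ • x - a₁ • y)))
        = (fun z : X => U (((2:ℝ)⁻¹) • x + z, ((2:ℝ)⁻¹) • (a₂ • x) + a₁ • z)) ∘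
          ((-(2:ℝ)⁻¹ • (LinearMap.id : X →ₗ[ℝ] X)).toAffineMap) := by
      funext y
      simp only [Function.comp_apply, LinearMap.coe_toAffineMap, LinearMap.smul_apply,
        LinearMap.id_coe, id_eq]
      congr 1
      refine Prod.ext ?_ ?_
      · simp only [smul_sub, neg_smul]; abel
      · simp only [smul_sub, half_smul_comm, neg_smul, smul_neg]; abel
    rw [heq]
    simpa using h
end

section
/- Let X be a Banach space, A ⊆ K convex, closed, bounded, containing distinct points a₁, a₂, and let U : X×X → ℝ be such that z ↦ U(x+z, y+εz) is concave in z ∈ X for all x, y ∈ X and ε ∈ A, with U(x, ax) ≤ 0 for all x ∈ X and a ∈ A (satisfied since x ↦ U(x,ax) is symmetric concave with U(0,0) ≤ 0). Define V(x,y) := U((x−y)/2, (a₂x − a₁y)/2). Then for every c₁, c₂ ∈ K with c₁ ≠ c₂ and (a₂c₁ − a₁c₂)/(c₁ − c₂) ∈ A, and every x, y ∈ X, the map z ↦ V(x + c₁z, y + c₂z) is concave in z ∈ X. -/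
open MeasureTheory Filter Set
open scoped ENNReal NNReal Topology

/-- `𝕜`-scalar multiplication commutes with real scalars, even without a tower assumption,
since `z ↦ c • z` is a continuous additive map, hence `ℝ`-linear. -/
lemma smul_real_comm' {𝕜 : Type} [RCLike 𝕜] {X : Type} [NormedAddCommGroup X]
    [NormedSpace 𝕜 X] [NormedSpace ℝ X] (c : 𝕜) (r : ℝ) (v : X) :
    c • (r • v) = r • (c • v) := by
  let T : X →+ X := ⟨⟨fun z => c • z, smul_zero c⟩, fun a b => smul_add c a b⟩
  have hcoe : ∀ w, T.toRealLinearMap (continuous_const_smul c) w = c • w :=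
    fun w => congrFun (AddMonoidHom.coe_toRealLinearMap T (continuous_const_smul c)) w
  have := (T.toRealLinearMap (continuous_const_smul c)).map_smul r v
  rw [hcoe, hcoe] at this
  exact this

theorem concave_V_along_lines (𝕜 : Type) [RCLike 𝕜] (X : Type) [NormedAddCommGroup X]
    [NormedSpace 𝕜 X] [NormedSpace ℝ X]
    (A : Set 𝕜) (hconv : Convex ℝ A) (hclosed : IsClosed A)
    (hbdd : Bornology.IsBounded A)
    (a₁ a₂ : 𝕜) (ha₁ : a₁ ∈ A) (ha₂ : a₂ ∈ A) (hne : a₁ ≠ a₂)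
    (U : X × X → ℝ)
    (hU : ∀ (x y : X), ∀ ε ∈ A,
      ConcaveOn ℝ Set.univ (fun z : X => U (x + z, y + ε • z)))
    (hU0 : ∀ (x : X), ∀ a ∈ A, U (x, a • x) ≤ 0) :
    ∀ c₁ c₂ : 𝕜, c₁ ≠ c₂ → (a₂ * c₁ - a₁ * c₂) / (c₁ - c₂) ∈ A →
    ∀ x y : X, ConcaveOn ℝ Set.univ
      (fun z : X => U ((2 : ℝ)⁻¹ • (x + c₁ • z - (y + c₂ • z)),
        (2 : ℝ)⁻¹ • (a₂ • (x + c₁ • z) - a₁ • (y + c₂ • z)))) := by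
  intro c₁ c₂ hc hε x y
  have hc' : c₁ - c₂ ≠ 0 := sub_ne_zero.mpr hc
  set ε : 𝕜 := (a₂ * c₁ - a₁ * c₂) / (c₁ - c₂) with hεdef
  have hεmul : ε * (c₁ - c₂) = a₂ * c₁ - a₁ * c₂ := div_mul_cancel₀ _ hc'
  -- the ℝ-linear map z ↦ 2⁻¹ • ((c₁ - c₂) • z)
  let L : X →ₗ[ℝ] X :=
    { toFun := fun z => (2 : ℝ)⁻¹ • ((c₁ - c₂) • z)
      map_add' := fun a b => by
        show (2 : ℝ)⁻¹ • ((c₁ - c₂) • (a + b)) = _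
        rw [smul_add, smul_add]
      map_smul' := fun r v => by
        show (2 : ℝ)⁻¹ • ((c₁ - c₂) • (r • v)) = r • ((2 : ℝ)⁻¹ • ((c₁ - c₂) • v))
        rw [smul_real_comm' (c₁ - c₂) r v, smul_comm] }
  have key := (hU ((2 : ℝ)⁻¹ • (x - y)) ((2 : ℝ)⁻¹ • (a₂ • x - a₁ • y)) ε hε).comp_linearMap L
  have hpre : (⇑L) ⁻¹' (Set.univ : Set X) = Set.univ := by simp
  rw [hpre] at key
  convert key using 1
  funext z
  simp only [Function.comp_apply, L, LinearMap.coe_mk, AddHom.coe_mk]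
  have h1 : x + c₁ • z - (y + c₂ • z) = (x - y) + (c₁ - c₂) • z := by
    rw [sub_smul]; abel
  have h2 : a₂ • (x + c₁ • z) - a₁ • (y + c₂ • z)
      = (a₂ • x - a₁ • y) + (a₂ * c₁ - a₁ * c₂) • z := by
    rw [smul_add, smul_add, smul_smul, smul_smul, sub_smul]; abel
  have h3 : ε • ((2 : ℝ)⁻¹ • ((c₁ - c₂) • z)) = (2 : ℝ)⁻¹ • ((a₂ * c₁ - a₁ * c₂) • z) := by
    rw [smul_real_comm' ε, smul_smul, hεmul]
  rw [h1, h2, smul_add, smul_add, h3]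
end

section
/- Let U : X × X → ℝ ∪ {+∞} satisfy: (a) z ↦ U(x+z, y+εz) is concave in z ∈ X for all x, y ∈ X and all ε ∈ A, and (b) U(x, ax) ≤ 0 for all x ∈ X and all a ∈ A, where A ⊆ K contains two distinct points a₁, a₂. Then U(x,y) < ∞ for all x, y ∈ X. More precisely, with z = (a₂x − y)/(a₂ − a₁) and u = (a₁x − y)/(a₁ − a₂), one has U(x,y) + U(z−u, a₁z − a₂u) ≤ 2U(z, a₁z) ≤ 0, hence both summands on the left are finite (in ℝ). -/
open MeasureTheory Filter Set
open scoped ENNReal NNReal Topology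

theorem burkholder_finite (𝕜 : Type) [RCLike 𝕜] (X : Type) [NormedAddCommGroup X]
    [NormedSpace 𝕜 X] [NormedSpace ℝ X]
    (A : Set 𝕜) (a₁ a₂ : 𝕜) (ha₁ : a₁ ∈ A) (ha₂ : a₂ ∈ A) (hne : a₁ ≠ a₂)
    (U : X × X → EReal) (hbot : ∀ w, U w ≠ ⊥)
    (hconc : ∀ (x y : X), ∀ ε ∈ A, ∀ z₁ z₂ : X,
      U (x + z₁, y + ε • z₁) + U (x + z₂, y + ε • z₂) ≤
        2 * U (x + (2 : ℝ)⁻¹ • (z₁ + z₂), y + ε • ((2 : ℝ)⁻¹ • (z₁ + z₂))))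
    (hU0 : ∀ (x : X), ∀ a ∈ A, U (x, a • x) ≤ 0) :
    ∀ x y : X, ∀ z u : X,
      z = (a₂ - a₁)⁻¹ • (a₂ • x - y) → u = (a₁ - a₂)⁻¹ • (a₁ • x - y) →
      (U (x, y) + U (z - u, a₁ • z - a₂ • u) ≤ 2 * U (z, a₁ • z) ∧
        2 * U (z, a₁ • z) ≤ 0 ∧ U (x, y) ≠ ⊤ ∧ U (z - u, a₁ • z - a₂ • u) ≠ ⊤) := by
  intro x y z u hz hu
  have hd : a₂ - a₁ ≠ 0 := sub_ne_zero.mpr hne.symm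
  have hd' : a₁ - a₂ ≠ 0 := sub_ne_zero.mpr hne
  have hzu : z + u = x := by
    subst hz hu
    match_scalars <;> field_simp <;> ring
  have hzu' : a₁ • z + a₂ • u = y := by
    subst hz hu
    match_scalars <;> field_simp <;> ring
  have key := hconc z (a₁ • z) a₂ ha₂ u (-u)
  have hsimp : z + (2 : ℝ)⁻¹ • (u + -u) = z := by simp
  have hsimp' : a₁ • z + a₂ • ((2 : ℝ)⁻¹ • (u + -u)) = a₁ • z := by simp
  rw [hsimp, hsimp', hzu, hzu'] at key
  have h1 : U (x, y) + U (z - u, a₁ • z - a₂ • u) ≤ 2 * U (z, a₁ • z) := by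
    simpa [sub_eq_add_neg, smul_neg] using key
  have hU0z : U (z, a₁ • z) ≤ 0 := hU0 z a₁ ha₁
  have h2 : 2 * U (z, a₁ • z) ≤ 0 := by
    calc 2 * U (z, a₁ • z) ≤ 2 * 0 := mul_le_mul_of_nonneg_left hU0z (by norm_num)
    _ = 0 := by simp
  have hle : U (x, y) + U (z - u, a₁ • z - a₂ • u) ≤ 0 := h1.trans h2
  refine ⟨h1, h2, ?_, ?_⟩
  · intro htop
    rw [htop, EReal.top_add_of_ne_bot (hbot _)] at hle
    exact absurd hle (by simp)
  · intro htop
    rw [htop, EReal.add_top_of_ne_bot (hbot _)] at hle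
    exact absurd hle (by simp)
end
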